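/- For n odd and m odd, every tuple in (Z/mZ)^n is periodic under the Ducci map D, i.e., the Ducci map D is a bijection on (Z/mZ)^n (equivalently K((Z/mZ)^n) = (Z/mZ)^n). -/

import Mathlib

/-- The Ducci map on `(ZMod m)^n`. -/
def ducci (m n : ℕ) [NeZero n] (v : Fin n → ZMod m) : Fin n → ZMod m :=
  fun i => v i + v (i + 1)

open Fin.NatCast in
lemma ducci_ker_step (m n : ℕ) [NeZero n] (w : Fin n → ZMod m)
    (h : ∀ i, w i + w (i + 1) = 0) :
    ∀ (k : ℕ) (i : Fin n), w (i + (k : Fin n)) = (-1) ^ k * w i := by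
  intro k
  induction k with
  | zero => intro i; simp
  | succ k ih =>
    intro i
    have hc : ((k + 1 : ℕ) : Fin n) = (k : Fin n) + 1 := by push_cast; ring
    have : w ((i + (k : Fin n)) + 1) = - w (i + (k : Fin n)) := by
      have := h (i + (k : Fin n)); linear_combination this
    rw [hc, ← add_assoc, this, ih i, pow_succ]
    ring

open Fin.NatCast in
lemma ducci_ker_zero (m n : ℕ) [NeZero n] (hn : Odd n) (hm : Odd m)
    (w : Fin n → ZMod m) (h : ducci m n w = 0) : w = 0 := by
  have hm0 : NeZero m := ⟨by rintro rfl; exact (Nat.not_odd_iff_even.mpr Even.zero) hm⟩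
  have h' : ∀ i, w i + w (i + 1) = 0 := fun i => congrFun h i
  funext i
  have hk := ducci_ker_step m n w h' n i
  rw [Fin.natCast_self, add_zero, Odd.neg_one_pow hn, neg_one_mul] at hk
  have h2 : (2 : ZMod m) * w i = 0 := by linear_combination hk
  have hu : IsUnit (2 : ZMod m) := by
    have : IsUnit ((2 : ℕ) : ZMod m) := by
      rw [ZMod.isUnit_iff_coprime]
      exact Nat.coprime_two_left.mpr hm
    simpa using this
  have := hu.mul_left_cancel (b := w i) (c := 0) (by simpa using h2)
  simpa using this

lemma ducci_injective (m n : ℕ) [NeZero n] (hn : Odd n) (hm : Odd m) :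
    Function.Injective (ducci m n) := by
  intro u v huv
  have hker : ducci m n (u - v) = 0 := by
    funext i
    have := congrFun huv i
    simp only [ducci, Pi.sub_apply, Pi.zero_apply]
    simp only [ducci] at this
    linear_combination this
  have := ducci_ker_zero m n hn hm (u - v) hker
  exact sub_eq_zero.mp this

theorem ducci_bijective_of_odd (m n : ℕ) [NeZero n] (hn : Odd n) (hm : Odd m) :
    Function.Bijective (ducci m n) ∧
      ∀ u : Fin n → ZMod m, ∃ t > 0, (ducci m n)^[t] u = u := by
  have hm0 : NeZero m := ⟨by rintro rfl; exact (Nat.not_odd_iff_even.mpr Even.zero) hm⟩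
  have hinj := ducci_injective m n hn hm
  refine ⟨Finite.injective_iff_bijective.mp hinj, fun u => ?_⟩
  -- pigeonhole: the orbit of u repeats
  obtain ⟨a, b, hab, heq⟩ := Finite.exists_ne_map_eq_of_infinite
    (fun k : ℕ => (ducci m n)^[k] u)
  wlog hlt : a < b generalizing a b
  · exact this b a (Ne.symm hab) heq.symm (by omega)
  have hinj' : Function.Injective ((ducci m n)^[a]) := hinj.iterate a
  have : (ducci m n)^[a] ((ducci m n)^[b - a] u) = (ducci m n)^[a] u := by
    rw [← Function.iterate_add_apply]
    have : a + (b - a) = b := by omega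
    rw [this]; exact heq.symm
  exact ⟨b - a, by omega, hinj' this⟩
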